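/- In the monomial case of the combinatorial game, an elementary blowup step strictly decreases the multiset of multiplicities of critical sets: if K is a minimal critical set (Σ_{h∈K} m(h) ≥ 1, minimal with this property among subsets having a common singular node below them) and we blow up, then each new critical set K_2', obtained from a critical superset K_2 ⊇ K by replacing some h ∈ K with the exceptional jib e carrying weight m(e) = Σ_{h'∈K} m(h') − 1, has strictly smaller multiplicity than K_2, since m(e) < m(h) for every h ∈ K. -/
import Mathlib


/-- multiplicity drop in the monomial case.  `H` is the finite set
of jibs with weight function `m : ι → ℚ≥0`.  A critical set is a `K ⊆ H` with
`∑_{h∈K} m(h) ≥ 1`; `K` is minimal if no proper subset is critical.  After the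
elementary blowup step for a minimal critical set `K`, the exceptional jib `e`
carries weight `m(e) = ∑_{h'∈K} m(h') − 1`, and every new critical set
`K₂' = (K₂ \ {h}) ∪ {e}`, for a critical `K₂ ⊇ K` and `h ∈ K`, has multiplicity
`∑_{K₂} m − m(h) + m(e)` strictly smaller than the multiplicity of `K₂`; indeed
`m(e) < m(h)` for every `h ∈ K`. -/
theorem new_critical_sets_have_smaller_multiplicity
    {ι : Type*} (H : Finset ι) (m : ι → ℚ) (hm : ∀ i, 0 ≤ m i)
    (K : Finset ι) (hKH : K ⊆ H)
    (hcrit : 1 ≤ ∑ h ∈ K, m h)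
    (hmin : ∀ K' ⊂ K, ∑ h ∈ K', m h < 1) :
    (∀ h ∈ K, (∑ h' ∈ K, m h') - 1 < m h) ∧
    ∀ K₂ : Finset ι, K₂ ⊆ H → K ⊆ K₂ → ∀ h ∈ K,
      ((∑ h' ∈ K₂, m h') - m h) + ((∑ h' ∈ K, m h') - 1) < ∑ h' ∈ K₂, m h' := by
  have key : ∀ h ∈ K, (∑ h' ∈ K, m h') - 1 < m h := by
    intro h hh
    classical
    have hsub : K.erase h ⊂ K := Finset.erase_ssubset hh
    have := hmin _ hsub
    have hsum : ∑ h' ∈ K.erase h, m h' = (∑ h' ∈ K, m h') - m h := by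
      rw [Finset.sum_erase_eq_sub hh]
    linarith [hsum ▸ this]
  refine ⟨key, fun K₂ _ _ h hh => ?_⟩
  have := key h hh
  linarith
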